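/- Let $X$ be a Hausdorff topological space, $p_1, p^* \in X$ distinct points, and $f \colon [0,1] \to X$ a loop with $f(0) = f(1) = p_1$ such that $f^{-1}(\{p^*\}) = \{s_0\}$ for some $s_0 \in (0,1)$. Let $F \colon [0,1]\times[0,1] \to X$ be a continuous map with $F(s,0) = f(s)$ and $F(s,1) = F(0,t) = F(1,t) = p_1$ for all $s,t \in [0,1]$. Let $M_0$ be the connected component of $F^{-1}(\{p^*\})$ containing $(s_0, 0)$, and let $O$ be the connected component of $([0,1]\times[0,1]) \setminus M_0$ containing $[0,1] \times \{1\}$. Define $G \colon [0,1]\times[0,1] \to X$ by $G(s,t) = F(s,t)$ if $(s,t) \in O$ and $G(s,t) = p^*$ otherwise. Then $G$ is continuous, satisfies $G(s,0) = f(s)$ and $G(s,1) = G(0,t) = G(1,t) = p_1$ for all $s,t \in [0,1]$ (so $G$ is again a null-homotopy of $f$ rel endpoints), and for every point $p_0 \in X$ not in the image of $f$ and distinct from $p^*$ and $p_1$, the preimage $G^{-1}(\{p_0\})$ is contained in $O$. -/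

import Mathlib

open scoped Classical

section Aux

open Set Metric

/-- Closed intervals in the unit interval are preconnected. -/
lemma unitInterval.isPreconnected_Icc (a b : unitInterval) :
    IsPreconnected (Set.Icc a b) := by
  rcases le_or_gt a b with hab | hab
  · have hmem : ∀ t : unitInterval, max (a : ℝ) (min (t : ℝ) (b : ℝ)) ∈ unitInterval := by
      intro t
      constructor
      · exact le_max_of_le_left a.2.1
      · exact max_le a.2.2 (le_trans (min_le_right _ _) b.2.2)
    have hcont : Continuous (fun t : unitInterval =>
        (⟨max (a : ℝ) (min (t : ℝ) (b : ℝ)), hmem t⟩ : unitInterval)) := by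
      apply Continuous.subtype_mk
      exact continuous_const.max (continuous_subtype_val.min continuous_const)
    have himg : Set.Icc a b = (fun t : unitInterval =>
        (⟨max (a : ℝ) (min (t : ℝ) (b : ℝ)), hmem t⟩ : unitInterval)) '' Set.univ := by
      ext y
      simp only [Set.mem_image, Set.mem_univ, true_and, Set.mem_Icc]
      constructor
      · rintro ⟨hay, hyb⟩
        refine ⟨y, ?_⟩
        apply Subtype.ext
        simp only []
        rw [min_eq_left (Subtype.coe_le_coe.mpr hyb), max_eq_right (Subtype.coe_le_coe.mpr hay)]
      · rintro ⟨t, rfl⟩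
        constructor
        · exact Subtype.mk_le_mk.mpr (le_max_left _ _)
        · exact Subtype.mk_le_mk.mpr
            (max_le (Subtype.coe_le_coe.mpr hab) (min_le_right _ _))
    rw [himg]
    exact isPreconnected_univ.image _ hcont.continuousOn
  · rw [Set.Icc_eq_empty (not_le.mpr hab)]
    exact isPreconnected_empty

/-- Closed balls in the unit interval are preconnected. -/
lemma unitInterval.isPreconnected_closedBall (x : unitInterval) {ε : ℝ} (hε : 0 < ε) :
    IsPreconnected (Metric.closedBall x ε) := by
  have ha : max ((x : ℝ) - ε) 0 ∈ unitInterval :=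
    ⟨le_max_right _ _, max_le (le_trans (by linarith) x.2.2) zero_le_one⟩
  have hb : min ((x : ℝ) + ε) 1 ∈ unitInterval :=
    ⟨le_min (by have := x.2.1; linarith) zero_le_one, min_le_right _ _⟩
  have : Metric.closedBall x ε = Set.Icc (⟨_, ha⟩ : unitInterval) ⟨_, hb⟩ := by
    ext y
    simp only [Metric.mem_closedBall, Set.mem_Icc, Subtype.dist_eq, Real.dist_eq, abs_sub_le_iff,
      ← Subtype.coe_le_coe]
    constructor
    · rintro ⟨h1, h2⟩
      exact ⟨max_le (by linarith) y.2.1, le_min (by linarith) y.2.2⟩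
    · rintro ⟨h1, h2⟩
      have h1' : (x : ℝ) - ε ≤ y := le_trans (le_max_left _ _) h1
      have h2' : (y : ℝ) ≤ x + ε := le_trans h2 (min_le_left _ _)
      exact ⟨by linarith, by linarith⟩
  rw [this]
  exact unitInterval.isPreconnected_Icc _ _

lemma unitInterval.locallyConnected_prod :
    LocallyConnectedSpace (unitInterval × unitInterval) := by
  apply locallyConnectedSpace_of_connected_bases
    (fun z ε => Metric.closedBall z ε) (fun _ ε => 0 < ε)
  · intro z
    exact Metric.nhds_basis_closedBall
  · intro z ε hε
    rw [← closedBall_prod_same]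
    exact (unitInterval.isPreconnected_closedBall z.1 hε).prod
      (unitInterval.isPreconnected_closedBall z.2 hε)

end Aux

/-- Given a null-homotopy `F` of a loop `f` hitting `p*` exactly once, redefining
`F` to be constantly `p*` outside the connected component `O` of the complement of
the component `M₀` of `F ⁻¹' {p*}` through `(s₀,0)` (where `O` contains the top
edge) yields a continuous null-homotopy `G` of `f` such that for every `p₀` not in
the image of `f` and distinct from `p*` and `p₁`, `G ⁻¹' {p₀} ⊆ O`. -/
theorem stmt_6 {X : Type*} [TopologicalSpace X] [T2Space X]
    (p₁ pstar : X) (hne : p₁ ≠ pstar)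
    (f : unitInterval → X) (hf : Continuous f) (hf0 : f 0 = p₁) (hf1 : f 1 = p₁)
    (s₀ : unitInterval) (hs₀0 : s₀ ≠ 0) (hs₀1 : s₀ ≠ 1)
    (hfs : f ⁻¹' {pstar} = {s₀})
    (F : unitInterval × unitInterval → X) (hF : Continuous F)
    (hFbot : ∀ s, F (s, 0) = f s) (hFtop : ∀ s, F (s, 1) = p₁)
    (hFleft : ∀ t, F (0, t) = p₁) (hFright : ∀ t, F (1, t) = p₁)
    (M₀ O : Set (unitInterval × unitInterval))
    (hM₀ : M₀ = connectedComponentIn (F ⁻¹' {pstar}) (s₀, 0))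
    (hO : O = connectedComponentIn M₀ᶜ (0, 1))
    (G : unitInterval × unitInterval → X)
    (hG : ∀ z, G z = if z ∈ O then F z else pstar) :
    Continuous G ∧
      (∀ s, G (s, 0) = f s) ∧ (∀ s, G (s, 1) = p₁) ∧
      (∀ t, G (0, t) = p₁) ∧ (∀ t, G (1, t) = p₁) ∧
      ∀ p₀ : X, p₀ ∉ Set.range f → p₀ ≠ pstar → p₀ ≠ p₁ → G ⁻¹' {p₀} ⊆ O := by
  have := unitInterval.locallyConnected_prod
  -- Basic facts
  have hfs₀ : f s₀ = pstar := by
    have : s₀ ∈ f ⁻¹' {pstar} := by rw [hfs]; exact rfl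
    exact this
  have hfne : ∀ s : unitInterval, s ≠ s₀ → f s ≠ pstar := by
    intro s hs hcon
    exact hs (by have : s ∈ f ⁻¹' {pstar} := hcon; rwa [hfs] at this)
  -- M₀ is a subset of the preimage of pstar
  have hM₀sub : M₀ ⊆ F ⁻¹' {pstar} := hM₀ ▸ connectedComponentIn_subset _ _
  have hOsub : O ⊆ M₀ᶜ := hO ▸ connectedComponentIn_subset _ _
  -- M₀ is closed
  have hpre_closed : IsClosed (F ⁻¹' {pstar}) := (isClosed_singleton).preimage hF
  have hs₀mem : ((s₀, (0:unitInterval)) : unitInterval × unitInterval) ∈ F ⁻¹' {pstar} := by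
    simp only [Set.mem_preimage, Set.mem_singleton_iff, hFbot, hfs₀]
  have hM₀closed : IsClosed M₀ := by
    rw [hM₀, connectedComponentIn_eq_image hs₀mem]
    exact hpre_closed.isClosedMap_subtype_val _ isClosed_connectedComponent
  have hM₀copen : IsOpen M₀ᶜ := hM₀closed.isOpen_compl
  have hOopen : IsOpen O := hO ▸ hM₀copen.connectedComponentIn
  -- extension principle: preconnected subsets of M₀ᶜ meeting O lie in O
  have hextend : ∀ S : Set (unitInterval × unitInterval), IsPreconnected S → S ⊆ M₀ᶜ →
      ∀ w, w ∈ S → w ∈ O → S ⊆ O := by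
    intro S hS hSM w hwS hwO
    have h1 : O = connectedComponentIn M₀ᶜ w := by
      rw [hO]
      exact connectedComponentIn_eq (hO ▸ hwO)
    rw [h1]
    exact hS.subset_connectedComponentIn hwS hSM
  -- edge sets
  have hTop : ∀ s : unitInterval, ((s, (1:unitInterval)) : unitInterval × unitInterval) ∈ O := by
    intro s
    have hc : Continuous (fun u : unitInterval => ((u, (1:unitInterval)) :
        unitInterval × unitInterval)) := continuous_id.prodMk continuous_const
    have hS : IsPreconnected ((fun u : unitInterval => ((u, (1:unitInterval)) :
        unitInterval × unitInterval)) '' Set.univ) :=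
      isPreconnected_univ.image _ hc.continuousOn
    have hSM : (fun u : unitInterval => ((u, (1:unitInterval)) :
        unitInterval × unitInterval)) '' Set.univ ⊆ M₀ᶜ := by
      rintro z ⟨u, -, rfl⟩ hz
      have := hM₀sub hz
      simp only [Set.mem_preimage, Set.mem_singleton_iff, hFtop] at this
      exact hne this
    have h01 : ((0,1) : unitInterval × unitInterval) ∈ (fun u : unitInterval =>
        ((u, (1:unitInterval)) : unitInterval × unitInterval)) '' Set.univ :=
      ⟨0, Set.mem_univ _, rfl⟩
    have hmemO : ((0,1) : unitInterval × unitInterval) ∈ O := by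
      rw [hO]
      apply mem_connectedComponentIn
      intro hz
      have := hM₀sub hz
      simp only [Set.mem_preimage, Set.mem_singleton_iff, hFleft] at this
      exact hne this
    exact hextend _ hS hSM _ h01 hmemO ⟨s, Set.mem_univ _, rfl⟩
  have hLeft : ∀ t : unitInterval, (((0:unitInterval), t) : unitInterval × unitInterval) ∈ O := by
    intro t
    have hc : Continuous (fun u : unitInterval => (((0:unitInterval), u) :
        unitInterval × unitInterval)) := continuous_const.prodMk continuous_id
    have hS : IsPreconnected ((fun u : unitInterval => (((0:unitInterval), u) :
        unitInterval × unitInterval)) '' Set.univ) :=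
      isPreconnected_univ.image _ hc.continuousOn
    have hSM : (fun u : unitInterval => (((0:unitInterval), u) :
        unitInterval × unitInterval)) '' Set.univ ⊆ M₀ᶜ := by
      rintro z ⟨u, -, rfl⟩ hz
      have := hM₀sub hz
      simp only [Set.mem_preimage, Set.mem_singleton_iff, hFleft] at this
      exact hne this
    exact hextend _ hS hSM _ ⟨1, Set.mem_univ _, rfl⟩ (hTop 0) ⟨t, Set.mem_univ _, rfl⟩
  have hRight : ∀ t : unitInterval, (((1:unitInterval), t) : unitInterval × unitInterval) ∈ O := by
    intro t
    have hc : Continuous (fun u : unitInterval => (((1:unitInterval), u) :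
        unitInterval × unitInterval)) := continuous_const.prodMk continuous_id
    have hS : IsPreconnected ((fun u : unitInterval => (((1:unitInterval), u) :
        unitInterval × unitInterval)) '' Set.univ) :=
      isPreconnected_univ.image _ hc.continuousOn
    have hSM : (fun u : unitInterval => (((1:unitInterval), u) :
        unitInterval × unitInterval)) '' Set.univ ⊆ M₀ᶜ := by
      rintro z ⟨u, -, rfl⟩ hz
      have := hM₀sub hz
      simp only [Set.mem_preimage, Set.mem_singleton_iff, hFright] at this
      exact hne this
    exact hextend _ hS hSM _ ⟨1, Set.mem_univ _, rfl⟩ (hTop 1) ⟨t, Set.mem_univ _, rfl⟩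
  -- bottom edge away from s₀ is in O
  have hBot : ∀ s : unitInterval, s ≠ s₀ →
      ((s, (0:unitInterval)) : unitInterval × unitInterval) ∈ O := by
    intro s hs
    rcases lt_or_gt_of_ne (Subtype.coe_ne_coe.mpr hs) with hlt | hgt
    · -- s < s₀ : connect (s,0) to (0,0), then (0,0) is on the left edge
      have hmem : ∀ t : unitInterval, min (t : ℝ) (s : ℝ) ∈ unitInterval :=
        fun t => ⟨le_min t.2.1 s.2.1, le_trans (min_le_left _ _) t.2.2⟩
      set g : unitInterval → unitInterval × unitInterval :=
        fun t => (⟨min (t : ℝ) (s : ℝ), hmem t⟩, 0) with hg_def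
      have hc : Continuous g := by
        apply Continuous.prodMk _ continuous_const
        exact (continuous_subtype_val.min continuous_const).subtype_mk _
      have hS : IsPreconnected (g '' Set.univ) := isPreconnected_univ.image _ hc.continuousOn
      have hSM : g '' Set.univ ⊆ M₀ᶜ := by
        rintro z ⟨u, -, rfl⟩ hz
        have h1 := hM₀sub hz
        simp only [hg_def, Set.mem_preimage, Set.mem_singleton_iff, hFbot] at h1
        refine hfne _ ?_ h1
        intro hcon
        have : min (u : ℝ) (s : ℝ) = (s₀ : ℝ) := congrArg Subtype.val hcon
        have : min (u : ℝ) (s : ℝ) ≤ (s : ℝ) := min_le_right _ _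
        rw [‹min (u : ℝ) (s : ℝ) = (s₀ : ℝ)›] at this
        linarith
      have h0mem : (((0:unitInterval), (0:unitInterval)) : unitInterval × unitInterval)
          ∈ g '' Set.univ := by
        refine ⟨0, Set.mem_univ _, ?_⟩
        simp only [hg_def, Prod.mk.injEq]
        refine ⟨Subtype.ext ?_, trivial⟩
        simp [min_eq_left s.2.1]
      have hsmem : ((s, (0:unitInterval)) : unitInterval × unitInterval) ∈ g '' Set.univ := by
        refine ⟨s, Set.mem_univ _, ?_⟩
        simp only [hg_def, Prod.mk.injEq]
        exact ⟨Subtype.ext (min_self _), trivial⟩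
      exact hextend _ hS hSM _ h0mem (hLeft 0) hsmem
    · -- s > s₀ : connect (s,0) to (1,0), then (1,0) is on the right edge
      have hmem : ∀ t : unitInterval, max (t : ℝ) (s : ℝ) ∈ unitInterval :=
        fun t => ⟨le_trans t.2.1 (le_max_left _ _), max_le t.2.2 s.2.2⟩
      set g : unitInterval → unitInterval × unitInterval :=
        fun t => (⟨max (t : ℝ) (s : ℝ), hmem t⟩, 0) with hg_def
      have hc : Continuous g := by
        apply Continuous.prodMk _ continuous_const
        exact (continuous_subtype_val.max continuous_const).subtype_mk _
      have hS : IsPreconnected (g '' Set.univ) := isPreconnected_univ.image _ hc.continuousOn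
      have hSM : g '' Set.univ ⊆ M₀ᶜ := by
        rintro z ⟨u, -, rfl⟩ hz
        have h1 := hM₀sub hz
        simp only [hg_def, Set.mem_preimage, Set.mem_singleton_iff, hFbot] at h1
        refine hfne _ ?_ h1
        intro hcon
        have heq : max (u : ℝ) (s : ℝ) = (s₀ : ℝ) := congrArg Subtype.val hcon
        have : (s : ℝ) ≤ max (u : ℝ) (s : ℝ) := le_max_right _ _
        rw [heq] at this
        linarith
      have h1mem : (((1:unitInterval), (0:unitInterval)) : unitInterval × unitInterval)
          ∈ g '' Set.univ := by
        refine ⟨1, Set.mem_univ _, ?_⟩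
        simp only [hg_def, Prod.mk.injEq]
        refine ⟨Subtype.ext ?_, trivial⟩
        simp [max_eq_left s.2.2]
      have hsmem : ((s, (0:unitInterval)) : unitInterval × unitInterval) ∈ g '' Set.univ := by
        refine ⟨s, Set.mem_univ _, ?_⟩
        simp only [hg_def, Prod.mk.injEq]
        exact ⟨Subtype.ext (max_self _), trivial⟩
      exact hextend _ hS hSM _ h1mem (hRight 0) hsmem
  -- frontier of O is contained in M₀
  have hfrontier : ∀ z ∈ frontier O, F z = pstar := by
    intro z hz
    have hzO : z ∉ O := fun h => hz.2 (subset_interior_iff_isOpen.mpr hOopen h)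
    suffices hzM : z ∈ M₀ by exact hM₀sub hzM
    by_contra hzM
    apply hzO
    have hzMc : z ∈ M₀ᶜ := hzM
    -- the component of z in M₀ᶜ is an open neighbourhood of z
    have hO' : IsOpen (connectedComponentIn M₀ᶜ z) := hM₀copen.connectedComponentIn
    have hzO' : z ∈ connectedComponentIn M₀ᶜ z := mem_connectedComponentIn hzMc
    have hclos : z ∈ closure O := hz.1
    obtain ⟨w, hwO', hwO⟩ := mem_closure_iff_nhds.mp hclos _ (hO'.mem_nhds hzO')
    have h1 : O = connectedComponentIn M₀ᶜ w := by
      rw [hO]; exact connectedComponentIn_eq (hO ▸ hwO)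
    have h2 : connectedComponentIn M₀ᶜ z = connectedComponentIn M₀ᶜ w :=
      connectedComponentIn_eq hwO'
    rw [h1, ← h2]
    exact hzO'
  -- continuity of G
  have hGeq : G = fun z => if z ∈ O then F z else pstar := funext hG
  have hGcont : Continuous G := by
    rw [hGeq]
    apply Continuous.if _ hF continuous_const
    intro a ha
    have : frontier {a | a ∈ O} = frontier O := rfl
    exact hfrontier a (this ▸ ha)
  refine ⟨hGcont, ?_, ?_, ?_, ?_, ?_⟩
  · -- bottom
    intro s
    by_cases hs : s = s₀
    · subst hs
      rw [hG]
      by_cases hmem : ((s, (0:unitInterval)) : unitInterval × unitInterval) ∈ O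
      · rw [if_pos hmem, hFbot]
      · rw [if_neg hmem, hfs₀]
    · rw [hG, if_pos (hBot s hs), hFbot]
  · intro s; rw [hG, if_pos (hTop s), hFtop]
  · intro t; rw [hG, if_pos (hLeft t), hFleft]
  · intro t; rw [hG, if_pos (hRight t), hFright]
  · intro p₀ _ hp₀star _ z hz
    simp only [Set.mem_preimage, Set.mem_singleton_iff] at hz
    by_contra hzO
    rw [hG, if_neg hzO] at hz
    exact hp₀star hz.symm
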